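/- Let $N \ge 2$ and $h_1,\dots,h_N > 0$ with $\sum_i h_i = 1$, giving nodes $x_0 = 0$, $x_i = x_{i-1}+h_i$. Define $\vartheta_N = 0$ and for $i = N-1,\dots,1$, $\vartheta_i^2 = \tfrac{1}{2}\big(1 - (2(1-\vartheta_{i+1})^2 - 1)\tfrac{h_{i+1}}{h_i}\big)$ (with $\vartheta_i \ge 0$ when defined). Suppose $\vartheta_i$ is real and $\vartheta_i < 1 - 1/\sqrt{2}$ for all $i \ge k$ for some $k \ge 1$. Then $\tfrac{h_i}{2}(2(1-\vartheta_i)^2 - 1) \le \tfrac{h_{i+1}}{2}(2(1-\vartheta_{i+1})^2 - 1)$ for all $i$ with $k \le i \le N-1$, and consequently $\tfrac{h_k}{2}(2(1-\vartheta_k)^2 - 1) \le \tfrac{h_N}{2}$. -/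

import Mathlib

theorem stmt13 (N k : ℕ) (hN : 2 ≤ N) (hk : 1 ≤ k) (hkN : k ≤ N - 1)
    (h θ : ℕ → ℝ) (hpos : ∀ i, 1 ≤ i → i ≤ N → 0 < h i)
    (hsum : ∑ i ∈ Finset.Icc 1 N, h i = 1)
    (hθN : θ N = 0)
    (hθnn : ∀ i, k ≤ i → i ≤ N - 1 → 0 ≤ θ i)
    (hθrec : ∀ i, k ≤ i → i ≤ N - 1 →
      θ i ^ 2 = (1 / 2) * (1 - (2 * (1 - θ (i + 1)) ^ 2 - 1) * (h (i + 1) / h i)))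
    (hθlt : ∀ i, k ≤ i → i ≤ N - 1 → θ i < 1 - 1 / Real.sqrt 2) :
    (∀ i, k ≤ i → i ≤ N - 1 →
      h i / 2 * (2 * (1 - θ i) ^ 2 - 1) ≤ h (i + 1) / 2 * (2 * (1 - θ (i + 1)) ^ 2 - 1)) ∧
    h k / 2 * (2 * (1 - θ k) ^ 2 - 1) ≤ h N / 2 := by
  have key : ∀ i, k ≤ i → i ≤ N - 1 →
      h i / 2 * (2 * (1 - θ i) ^ 2 - 1) ≤ h (i + 1) / 2 * (2 * (1 - θ (i + 1)) ^ 2 - 1) := by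
    intro i hki hiN
    have hi1 : 1 ≤ i := le_trans hk hki
    have hiN' : i ≤ N := by omega
    have hpi : 0 < h i := hpos i hi1 hiN'
    have hrec := hθrec i hki hiN
    have hnn := hθnn i hki hiN
    have hlt : θ i < 1 := by
      have := hθlt i hki hiN
      have hs : 0 < Real.sqrt 2 := by positivity
      have : (0:ℝ) < 1 / Real.sqrt 2 := by positivity
      linarith [hθlt i hki hiN]
    have heq : h (i + 1) / 2 * (2 * (1 - θ (i + 1)) ^ 2 - 1) = h i / 2 * (1 - 2 * θ i ^ 2) := by
      field_simp at hrec ⊢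
      nlinarith [hrec]
    rw [heq]
    nlinarith [mul_nonneg hnn (sub_nonneg.2 hlt.le), hpi.le]
  refine ⟨key, ?_⟩
  have chain : ∀ j, k ≤ j → j ≤ N →
      h k / 2 * (2 * (1 - θ k) ^ 2 - 1) ≤ h j / 2 * (2 * (1 - θ j) ^ 2 - 1) := by
    intro j hkj
    induction j, hkj using Nat.le_induction with
    | base => intro _; exact le_refl _
    | succ n hn ih =>
      intro hnN
      have hn' : n ≤ N - 1 := by omega
      exact le_trans (ih (by omega)) (key n hn hn')
  have := chain N (by omega) le_rfl
  rw [hθN] at this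
  calc h k / 2 * (2 * (1 - θ k) ^ 2 - 1) ≤ h N / 2 * (2 * (1 - 0) ^ 2 - 1) := this
    _ = h N / 2 := by ring
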